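/- Let x₀, y₀ ∈ ℝⁿ, r_x, r_y > 0, θ ∈ S^{n-1}, and ε > 0 with ε < 1. Suppose |y₀ − x₀| ≥ t(r_x + r_y) and (y₀ − x₀)·θ ≥ (1−ε)|y₀−x₀| where t ≥ 1 satisfies (1−ε)t − 1 > 0. Then for all y ∈ B(y₀, r_y) and x ∈ B(x₀, r_x), ((y−x)·θ)/|y−x| ≥ (1−ε)/(1 + 1/t) − 1/(t+1). -/
import Mathlib


open MeasureTheory Metric Filter Set
open scoped RealInnerProductSpace

theorem stmt7 (n : ℕ) (x₀ y₀ θ : EuclideanSpace ℝ (Fin n)) (r_x r_y t ε : ℝ)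
    (hθ : ‖θ‖ = 1) (hrx : 0 < r_x) (hry : 0 < r_y) (hε0 : 0 < ε) (hε1 : ε < 1)
    (ht : 1 ≤ t) (ht' : 0 < (1 - ε) * t - 1)
    (hsep : t * (r_x + r_y) ≤ ‖y₀ - x₀‖)
    (hangle : (1 - ε) * ‖y₀ - x₀‖ ≤ ⟪y₀ - x₀, θ⟫) :
    ∀ y ∈ closedBall y₀ r_y, ∀ x ∈ closedBall x₀ r_x,
      (1 - ε) / (1 + 1 / t) - 1 / (t + 1) ≤ ⟪y - x, θ⟫ / ‖y - x‖ := by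
  intro y hy x hx
  have ht0 : (0:ℝ) < t := lt_of_lt_of_le one_pos ht
  set d := ‖y₀ - x₀‖ with hd
  set r := r_x + r_y with hr
  have hr0 : 0 < r := by positivity
  have hdpos : 0 < d := lt_of_lt_of_le (by positivity) hsep
  -- perturbation norm bound
  have hpert : ‖(y - x) - (y₀ - x₀)‖ ≤ r := by
    have h1 : ‖y - y₀‖ ≤ r_y := by
      rw [← dist_eq_norm]; exact mem_closedBall.mp hy
    have h2 : ‖x - x₀‖ ≤ r_x := by
      rw [← dist_eq_norm]; exact mem_closedBall.mp hx
    calc ‖(y - x) - (y₀ - x₀)‖ = ‖(y - y₀) - (x - x₀)‖ := by congr 1; abel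
      _ ≤ ‖y - y₀‖ + ‖x - x₀‖ := norm_sub_le _ _
      _ ≤ r_y + r_x := add_le_add h1 h2
      _ = r := by rw [hr]; ring
  -- inner product lower bound
  have hinner : (1 - ε) * d - r ≤ ⟪y - x, θ⟫ := by
    have hsplit : ⟪y - x, θ⟫ = ⟪y₀ - x₀, θ⟫ + ⟪(y - x) - (y₀ - x₀), θ⟫ := by
      rw [← inner_add_left]; congr 1; abel
    have hcs : |⟪(y - x) - (y₀ - x₀), θ⟫| ≤ r := by
      calc |⟪(y - x) - (y₀ - x₀), θ⟫| ≤ ‖(y - x) - (y₀ - x₀)‖ * ‖θ‖ :=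
            abs_real_inner_le_norm _ _
        _ = ‖(y - x) - (y₀ - x₀)‖ := by rw [hθ, mul_one]
        _ ≤ r := hpert
    have := abs_le.mp hcs
    rw [hsplit]
    linarith [hangle]
  -- numerator positivity
  have hnum : 0 < (1 - ε) * d - r := by
    have : r * ((1 - ε) * t - 1) ≤ (1 - ε) * d - r := by nlinarith
    nlinarith
  -- norm bounds
  have hnormub : ‖y - x‖ ≤ d + r := by
    calc ‖y - x‖ = ‖(y₀ - x₀) + ((y - x) - (y₀ - x₀))‖ := by congr 1; abel
      _ ≤ ‖y₀ - x₀‖ + ‖(y - x) - (y₀ - x₀)‖ := norm_add_le _ _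
      _ ≤ d + r := by exact add_le_add le_rfl hpert
  have hnormpos : 0 < ‖y - x‖ := by
    have h1 : ⟪y - x, θ⟫ ≤ ‖y - x‖ := by
      have := real_inner_le_norm (y - x) θ
      rwa [hθ, mul_one] at this
    linarith
  -- reduce constant
  have hconst : (1 - ε) / (1 + 1 / t) - 1 / (t + 1) = ((1 - ε) * t - 1) / (t + 1) := by
    field_simp
  rw [hconst, div_le_div_iff₀ (by positivity) hnormpos]
  calc ((1 - ε) * t - 1) * ‖y - x‖ ≤ ((1 - ε) * t - 1) * (d + r) :=
        mul_le_mul_of_nonneg_left hnormub (le_of_lt ht')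
    _ ≤ ((1 - ε) * d - r) * (t + 1) := by nlinarith
    _ ≤ ⟪y - x, θ⟫ * (t + 1) := by nlinarith
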